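/- arXiv:2409.17117 — 6 statements merged into one kernel-verified Lean document; each statement's English description precedes it below -/
import Mathlib

section
/- (Theorem 1, lines formulation.) Let a, b, c, d be natural numbers. Let L be a finite set of pairwise distinct, pairwise non-parallel lines in ℝ² with |L| = a + b + c + 3. Let A, B, C be three distinct points of ℝ² such that exactly a + 2 lines of L pass through A, exactly b + 2 lines of L pass through B, and exactly c + 2 lines of L pass through C. Suppose that every point of ℝ² other than A, B, C lies on at most 3 lines of L, and that exactly d points other than A, B, C lie on exactly 3 lines of L. Then the number of 3-element subsets of L whose three lines are not concurrent equals C(a+b+c+3, 3) − C(a+2, 3) − C(b+2, 3) − C(c+2, 3) − d. -/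
lemma aux_dir (l : AffineSubspace ℝ (ℝ × ℝ)) (h1 : Module.finrank ℝ l.direction = 1)
    {p q : ℝ × ℝ} (hp : p ∈ l) (hq : q ∈ l) (hpq : p ≠ q) :
    l.direction = Submodule.span ℝ {q -ᵥ p} := by
  have hv : q -ᵥ p ∈ l.direction := AffineSubspace.vsub_mem_direction hq hp
  have hne : q -ᵥ p ≠ 0 := by simpa [vsub_eq_sub, sub_eq_zero] using (Ne.symm hpq)
  have hle : Submodule.span ℝ {q -ᵥ p} ≤ l.direction := by
    rw [Submodule.span_singleton_le_iff_mem]; exact hv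
  exact (Submodule.eq_of_le_of_finrank_eq hle
    (by rw [finrank_span_singleton hne, h1])).symm

lemma aux_eq (l1 l2 : AffineSubspace ℝ (ℝ × ℝ))
    (h1 : Module.finrank ℝ l1.direction = 1) (h2 : Module.finrank ℝ l2.direction = 1)
    (hpar : l1 ≠ l2 → l1.direction ≠ l2.direction)
    {p q : ℝ × ℝ} (hp1 : p ∈ l1) (hq1 : q ∈ l1) (hp2 : p ∈ l2) (hq2 : q ∈ l2)
    (hpq : p ≠ q) : l1 = l2 := by
  by_contra h
  exact hpar h (by rw [aux_dir l1 h1 hp1 hq1 hpq, aux_dir l2 h2 hp2 hq2 hpq])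

open scoped Classical in
/-- Theorem 1 (lines formulation): for a set `L` of `a+b+c+3` pairwise distinct,
pairwise non-parallel lines in ℝ², with exactly `a+2` lines through `A`, `b+2`
through `B`, `c+2` through `C`, every other point on at most 3 lines, and
exactly `d` other points on exactly 3 lines, the number of non-concurrent
3-element subsets of `L` is `C(a+b+c+3,3) − C(a+2,3) − C(b+2,3) − C(c+2,3) − d`. -/
theorem stmt_2 (a b c d : ℕ) (L : Finset (AffineSubspace ℝ (ℝ × ℝ)))
    (hline : ∀ l ∈ L, Module.finrank ℝ l.direction = 1)
    (hpar : ∀ l1 ∈ L, ∀ l2 ∈ L, l1 ≠ l2 → l1.direction ≠ l2.direction)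
    (hcard : L.card = a + b + c + 3)
    (A B C : ℝ × ℝ) (hAB : A ≠ B) (hAC : A ≠ C) (hBC : B ≠ C)
    (hA : (L.filter (fun l => A ∈ l)).card = a + 2)
    (hB : (L.filter (fun l => B ∈ l)).card = b + 2)
    (hC : (L.filter (fun l => C ∈ l)).card = c + 2)
    (hmax : ∀ p : ℝ × ℝ, p ≠ A → p ≠ B → p ≠ C →
      (L.filter (fun l => p ∈ l)).card ≤ 3)
    (D : Finset (ℝ × ℝ))
    (hD : ∀ p : ℝ × ℝ, p ∈ D ↔
      p ≠ A ∧ p ≠ B ∧ p ≠ C ∧ (L.filter (fun l => p ∈ l)).card = 3)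
    (hDcard : D.card = d) :
    ((((L.powersetCard 3).filter
        (fun s => ¬ ∃ p : ℝ × ℝ, ∀ l ∈ s, p ∈ l)).card : ℤ))
      = ((a + b + c + 3).choose 3 : ℤ) - ((a + 2).choose 3 : ℤ)
        - ((b + 2).choose 3 : ℤ) - ((c + 2).choose 3 : ℤ) - (d : ℤ) := by
  -- no two distinct points lie on two distinct lines simultaneously within a subset
  have key : ∀ s : Finset (AffineSubspace ℝ (ℝ × ℝ)), s ⊆ L → 2 ≤ s.card →
      ∀ p q : ℝ × ℝ, p ≠ q → (∀ l ∈ s, p ∈ l) → (∀ l ∈ s, q ∈ l) → False := by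
    intro s hs hc p q hpq hp hq
    obtain ⟨l1, h1, l2, h2, hne⟩ := Finset.one_lt_card.mp hc
    exact hne (aux_eq l1 l2 (hline _ (hs h1)) (hline _ (hs h2))
      (hpar _ (hs h1) _ (hs h2)) (hp _ h1) (hq _ h1) (hp _ h2) (hq _ h2) hpq)
  set T := L.powersetCard 3 with hT
  set SA := T.filter (fun s => ∀ l ∈ s, A ∈ l) with hSA
  set SB := T.filter (fun s => ∀ l ∈ s, B ∈ l) with hSB
  set SC := T.filter (fun s => ∀ l ∈ s, C ∈ l) with hSC
  set SD := D.image (fun p => L.filter (fun l => p ∈ l)) with hSD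
  -- facts about membership
  have memT : ∀ s, s ∈ T ↔ s ⊆ L ∧ s.card = 3 := fun s => Finset.mem_powersetCard
  have hSDmem : ∀ s ∈ SD, s ⊆ L ∧ s.card = 3 ∧ ∃ p : ℝ × ℝ, p ≠ A ∧ p ≠ B ∧ p ≠ C ∧
      (∀ l ∈ s, p ∈ l) ∧ s = L.filter (fun l => p ∈ l) := by
    intro s hs
    obtain ⟨p, hp, rfl⟩ := Finset.mem_image.mp hs
    obtain ⟨h1, h2, h3, h4⟩ := (hD p).mp hp
    exact ⟨Finset.filter_subset _ _, h4, p, h1, h2, h3,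
      fun l hl => (Finset.mem_filter.mp hl).2, rfl⟩
  -- union decomposition
  have hunion : T.filter (fun s => ∃ p : ℝ × ℝ, ∀ l ∈ s, p ∈ l) = SA ∪ SB ∪ SC ∪ SD := by
    ext s
    simp only [Finset.mem_filter, Finset.mem_union, hSA, hSB, hSC]
    constructor
    · rintro ⟨hsT, p, hp⟩
      obtain ⟨hsL, hs3⟩ := (memT s).mp hsT
      by_cases h1 : p = A
      · exact Or.inl (Or.inl (Or.inl ⟨hsT, h1 ▸ hp⟩))
      by_cases h2 : p = B
      · exact Or.inl (Or.inl (Or.inr ⟨hsT, h2 ▸ hp⟩))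
      by_cases h3 : p = C
      · exact Or.inl (Or.inr ⟨hsT, h3 ▸ hp⟩)
      · refine Or.inr (Finset.mem_image.mpr ⟨p, ?_, ?_⟩)
        · have hsub : s ⊆ L.filter (fun l => p ∈ l) := fun l hl =>
            Finset.mem_filter.mpr ⟨hsL hl, hp l hl⟩
          have hle : (L.filter (fun l => p ∈ l)).card ≤ 3 := hmax p h1 h2 h3
          have : (L.filter (fun l => p ∈ l)).card = 3 := le_antisymm hle
            (hs3 ▸ Finset.card_le_card hsub)
          exact (hD p).mpr ⟨h1, h2, h3, this⟩
        · have hsub : s ⊆ L.filter (fun l => p ∈ l) := fun l hl =>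
            Finset.mem_filter.mpr ⟨hsL hl, hp l hl⟩
          have hle : (L.filter (fun l => p ∈ l)).card ≤ 3 := hmax p h1 h2 h3
          exact (Finset.eq_of_subset_of_card_le hsub (hs3 ▸ hle)).symm
    · rintro ((( ⟨hsT, h⟩ | ⟨hsT, h⟩ ) | ⟨hsT, h⟩) | h)
      · exact ⟨hsT, A, h⟩
      · exact ⟨hsT, B, h⟩
      · exact ⟨hsT, C, h⟩
      · obtain ⟨hsL, hs3, p, _, _, _, hp, _⟩ := hSDmem s h
        exact ⟨(memT s).mpr ⟨hsL, hs3⟩, p, hp⟩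
  -- disjointness helper
  have two_le : ∀ s : Finset (AffineSubspace ℝ (ℝ × ℝ)), s.card = 3 → 2 ≤ s.card := by
    intro s h; omega
  have djAB : Disjoint SA SB := by
    rw [Finset.disjoint_left]
    intro s hsA hsB
    obtain ⟨hsT, hpA⟩ := Finset.mem_filter.mp hsA
    obtain ⟨_, hpB⟩ := Finset.mem_filter.mp hsB
    obtain ⟨hsL, hs3⟩ := (memT s).mp hsT
    exact key s hsL (two_le s hs3) A B hAB hpA hpB
  have djAC : Disjoint SA SC := by
    rw [Finset.disjoint_left]
    intro s hsA hsC
    obtain ⟨hsT, hpA⟩ := Finset.mem_filter.mp hsA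
    obtain ⟨_, hpC⟩ := Finset.mem_filter.mp hsC
    obtain ⟨hsL, hs3⟩ := (memT s).mp hsT
    exact key s hsL (two_le s hs3) A C hAC hpA hpC
  have djBC : Disjoint SB SC := by
    rw [Finset.disjoint_left]
    intro s hsB hsC
    obtain ⟨hsT, hpB⟩ := Finset.mem_filter.mp hsB
    obtain ⟨_, hpC⟩ := Finset.mem_filter.mp hsC
    obtain ⟨hsL, hs3⟩ := (memT s).mp hsT
    exact key s hsL (two_le s hs3) B C hBC hpB hpC
  have djD : ∀ X : ℝ × ℝ, X = A ∨ X = B ∨ X = C →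
      Disjoint (T.filter (fun s => ∀ l ∈ s, X ∈ l)) SD := by
    intro X _hX
    rw [Finset.disjoint_left]
    intro s hsX hsD
    obtain ⟨hsT, hpX⟩ := Finset.mem_filter.mp hsX
    obtain ⟨hsL, hs3, p, h1, h2, h3, hp, _⟩ := hSDmem s hsD
    have hpne : p ≠ X := by rcases _hX with rfl | rfl | rfl <;> assumption
    exact key s hsL (two_le s hs3) p X hpne hp hpX
  have djAD : Disjoint SA SD := djD A (Or.inl rfl)
  have djBD : Disjoint SB SD := djD B (Or.inr (Or.inl rfl))
  have djCD : Disjoint SC SD := djD C (Or.inr (Or.inr rfl))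
  -- cardinalities
  have hSAcard : SA.card = (a + 2).choose 3 := by
    have : SA = (L.filter (fun l => A ∈ l)).powersetCard 3 := by
      ext s
      rw [hSA, Finset.mem_filter, memT s, Finset.mem_powersetCard]
      constructor
      · rintro ⟨⟨h1, h2⟩, h3⟩
        exact ⟨fun l hl => Finset.mem_filter.mpr ⟨h1 hl, h3 l hl⟩, h2⟩
      · rintro ⟨h1, h2⟩
        exact ⟨⟨fun l hl => (Finset.mem_filter.mp (h1 hl)).1, h2⟩,
          fun l hl => (Finset.mem_filter.mp (h1 hl)).2⟩
    rw [this, Finset.card_powersetCard, hA]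
  have hSBcard : SB.card = (b + 2).choose 3 := by
    have : SB = (L.filter (fun l => B ∈ l)).powersetCard 3 := by
      ext s
      rw [hSB, Finset.mem_filter, memT s, Finset.mem_powersetCard]
      constructor
      · rintro ⟨⟨h1, h2⟩, h3⟩
        exact ⟨fun l hl => Finset.mem_filter.mpr ⟨h1 hl, h3 l hl⟩, h2⟩
      · rintro ⟨h1, h2⟩
        exact ⟨⟨fun l hl => (Finset.mem_filter.mp (h1 hl)).1, h2⟩,
          fun l hl => (Finset.mem_filter.mp (h1 hl)).2⟩
    rw [this, Finset.card_powersetCard, hB]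
  have hSCcard : SC.card = (c + 2).choose 3 := by
    have : SC = (L.filter (fun l => C ∈ l)).powersetCard 3 := by
      ext s
      rw [hSC, Finset.mem_filter, memT s, Finset.mem_powersetCard]
      constructor
      · rintro ⟨⟨h1, h2⟩, h3⟩
        exact ⟨fun l hl => Finset.mem_filter.mpr ⟨h1 hl, h3 l hl⟩, h2⟩
      · rintro ⟨h1, h2⟩
        exact ⟨⟨fun l hl => (Finset.mem_filter.mp (h1 hl)).1, h2⟩,
          fun l hl => (Finset.mem_filter.mp (h1 hl)).2⟩
    rw [this, Finset.card_powersetCard, hC]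
  have hSDcard : SD.card = d := by
    rw [hSD, Finset.card_image_of_injOn, hDcard]
    intro p hp q hq hpq
    by_contra hne
    obtain ⟨_, _, _, h3⟩ := (hD p).mp hp
    have hsub : L.filter (fun l => p ∈ l) ⊆ L := Finset.filter_subset _ _
    have hpq' : L.filter (fun l => p ∈ l) = L.filter (fun l => q ∈ l) := hpq
    refine key (L.filter (fun l => p ∈ l)) hsub (by omega) p q hne
      (fun l hl => (Finset.mem_filter.mp hl).2) (fun l hl => ?_)
    have : l ∈ L.filter (fun l => q ∈ l) := by rw [← hpq']; exact hl
    exact (Finset.mem_filter.mp this).2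
  -- total
  have hTcard : T.card = (a + b + c + 3).choose 3 := by
    rw [hT, Finset.card_powersetCard, hcard]
  have hconc : (T.filter (fun s => ∃ p : ℝ × ℝ, ∀ l ∈ s, p ∈ l)).card
      = (a + 2).choose 3 + (b + 2).choose 3 + (c + 2).choose 3 + d := by
    rw [hunion]
    rw [Finset.card_union_of_disjoint, Finset.card_union_of_disjoint,
      Finset.card_union_of_disjoint djAB, hSAcard, hSBcard, hSCcard, hSDcard]
    · exact Finset.disjoint_union_left.mpr ⟨djAC, djBC⟩
    · exact Finset.disjoint_union_left.mpr
        ⟨Finset.disjoint_union_left.mpr ⟨djAD, djBD⟩, djCD⟩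
  have hsplit := Finset.card_filter_add_card_filter_not
    (s := T) (p := fun s => ∃ p : ℝ × ℝ, ∀ l ∈ s, p ∈ l)
  have hle : (a + 2).choose 3 + (b + 2).choose 3 + (c + 2).choose 3 + d ≤
      (a + b + c + 3).choose 3 := by
    rw [← hconc, ← hTcard]
    exact Finset.card_le_card (Finset.filter_subset _ _)
  rw [hconc, hTcard] at hsplit
  omega
end

section
/- Let p be an odd prime. Then there exist no integers i, j, k with 1 ≤ i ≤ p−1, 1 ≤ j ≤ p−1, 1 ≤ k ≤ p−1 such that i·j·k = (p−i)·(p−j)·(p−k). -/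
/-- For an odd prime `p`, there are no integers `1 ≤ i, j, k ≤ p − 1` with
`i·j·k = (p−i)·(p−j)·(p−k)`. -/
theorem stmt_7 (p : ℕ) (hp : p.Prime) (hodd : Odd p) :
    ¬ ∃ i j k : ℤ, 1 ≤ i ∧ i ≤ (p : ℤ) - 1 ∧ 1 ≤ j ∧ j ≤ (p : ℤ) - 1 ∧
      1 ≤ k ∧ k ≤ (p : ℤ) - 1 ∧
      i * j * k = ((p : ℤ) - i) * ((p : ℤ) - j) * ((p : ℤ) - k) := by
  rintro ⟨i, j, k, hi1, hi2, hj1, hj2, hk1, hk2, heq⟩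
  haveI : Fact p.Prime := ⟨hp⟩
  have hnd : ∀ x : ℤ, 1 ≤ x → x ≤ (p : ℤ) - 1 → (x : ZMod p) ≠ 0 := by
    intro x h1 h2 h0
    rw [ZMod.intCast_zmod_eq_zero_iff_dvd] at h0
    have := Int.le_of_dvd (by omega) h0
    omega
  have hcast := congrArg (fun n : ℤ => (n : ZMod p)) heq
  simp only [Int.cast_mul, Int.cast_sub, Int.cast_natCast, ZMod.natCast_self,
    zero_sub] at hcast
  have h2 : (2 : ZMod p) * ((i : ZMod p) * (j : ZMod p) * (k : ZMod p)) = 0 := by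
    ring_nf
    ring_nf at hcast
    linear_combination hcast
  have h2ne : (2 : ZMod p) ≠ 0 := by
    intro h
    have hd : p ∣ 2 := (ZMod.natCast_eq_zero_iff 2 p).mp (by exact_mod_cast h)
    have := Nat.le_of_dvd (by norm_num) hd
    have h2p : p = 2 := by
      have := hp.two_le; omega
    rcases hodd with ⟨m, hm⟩; omega
  rcases mul_eq_zero.mp h2 with h | h
  · exact h2ne h
  rcases mul_eq_zero.mp h with h | h
  rcases mul_eq_zero.mp h with h | h
  · exact hnd i hi1 hi2 h
  · exact hnd j hj1 hj2 h
  · exact hnd k hk1 hk2 h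
end

section
/- Let p be an odd prime, let m ≥ 1 be a natural number, and set q = p^m. Then there exist no integers i, j, k with 1 ≤ i ≤ q−1, 1 ≤ j ≤ q−1, 1 ≤ k ≤ q−1 such that i·j·k = (q−i)·(q−j)·(q−k). -/
private lemma decomp_aux (p m : ℕ) (hp : p.Prime) (n : ℕ) (hn : 0 < n)
    (hlt : n < p ^ m) : ∃ a x : ℕ, a < m ∧ ¬ p ∣ x ∧ 0 < x ∧ n = p ^ a * x := by
  refine ⟨n.factorization p, n / p ^ n.factorization p, ?_, ?_, ?_, ?_⟩
  · have h1 : p ^ n.factorization p ∣ n := Nat.ordProj_dvd n p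
    have h2 : p ^ n.factorization p ≤ n := Nat.le_of_dvd hn h1
    have : p ^ n.factorization p < p ^ m := lt_of_le_of_lt h2 hlt
    exact (Nat.pow_lt_pow_iff_right hp.one_lt).mp this
  · exact Nat.not_dvd_ordCompl hp hn.ne'
  · exact Nat.ordCompl_pos p hn.ne'
  · exact (Nat.ordProj_mul_ordCompl_eq_self n p).symm

/-- For `q = p^m` a power of an odd prime `p` (with `m ≥ 1`), there are no
integers `1 ≤ i, j, k ≤ q − 1` with `i·j·k = (q−i)·(q−j)·(q−k)`. -/
theorem stmt_8 (p m q : ℕ) (hp : p.Prime) (hodd : Odd p) (hm : 1 ≤ m)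
    (hq : q = p ^ m) :
    ¬ ∃ i j k : ℤ, 1 ≤ i ∧ i ≤ (q : ℤ) - 1 ∧ 1 ≤ j ∧ j ≤ (q : ℤ) - 1 ∧
      1 ≤ k ∧ k ≤ (q : ℤ) - 1 ∧
      i * j * k = ((q : ℤ) - i) * ((q : ℤ) - j) * ((q : ℤ) - k) := by
  rintro ⟨i, j, k, hi1, hi2, hj1, hj2, hk1, hk2, heq⟩
  -- convert to naturals
  have hiN : (i.toNat : ℤ) = i := Int.toNat_of_nonneg (by linarith)
  have hjN : (j.toNat : ℤ) = j := Int.toNat_of_nonneg (by linarith)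
  have hkN : (k.toNat : ℤ) = k := Int.toNat_of_nonneg (by linarith)
  have hiq : i.toNat < p ^ m := by
    have : i < (q : ℤ) := by linarith
    rw [← hiN, hq] at this; exact_mod_cast this
  have hjq : j.toNat < p ^ m := by
    have : j < (q : ℤ) := by linarith
    rw [← hjN, hq] at this; exact_mod_cast this
  have hkq : k.toNat < p ^ m := by
    have : k < (q : ℤ) := by linarith
    rw [← hkN, hq] at this; exact_mod_cast this
  have hipos : 0 < i.toNat := by omega
  have hjpos : 0 < j.toNat := by omega
  have hkpos : 0 < k.toNat := by omega
  obtain ⟨a, x, ham, hxp, hxpos, hix⟩ := decomp_aux p m hp _ hipos hiq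
  obtain ⟨b, y, hbm, hyp, hypos, hjy⟩ := decomp_aux p m hp _ hjpos hjq
  obtain ⟨c, z, hcm, hzp, hzpos, hkz⟩ := decomp_aux p m hp _ hkpos hkq
  -- integer versions
  have hiZ : i = (p : ℤ) ^ a * (x : ℤ) := by rw [← hiN, hix]; push_cast; ring
  have hjZ : j = (p : ℤ) ^ b * (y : ℤ) := by rw [← hjN, hjy]; push_cast; ring
  have hkZ : k = (p : ℤ) ^ c * (z : ℤ) := by rw [← hkN, hkz]; push_cast; ring
  have hqa : (q : ℤ) = (p : ℤ) ^ a * (p : ℤ) ^ (m - a) := by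
    rw [hq, ← pow_add]; push_cast; rw [Nat.add_sub_cancel' ham.le]
  have hqb : (q : ℤ) = (p : ℤ) ^ b * (p : ℤ) ^ (m - b) := by
    rw [hq, ← pow_add]; push_cast; rw [Nat.add_sub_cancel' hbm.le]
  have hqc : (q : ℤ) = (p : ℤ) ^ c * (p : ℤ) ^ (m - c) := by
    rw [hq, ← pow_add]; push_cast; rw [Nat.add_sub_cancel' hcm.le]
  have hpne : ((p : ℤ) ^ (a + b + c)) ≠ 0 :=
    pow_ne_zero _ (by exact_mod_cast hp.pos.ne')
  have key : (x : ℤ) * y * z =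
      ((p : ℤ) ^ (m - a) - x) * ((p : ℤ) ^ (m - b) - y) * ((p : ℤ) ^ (m - c) - z) := by
    apply mul_left_cancel₀ hpne
    calc (p : ℤ) ^ (a + b + c) * ((x : ℤ) * y * z)
        = i * j * k := by rw [hiZ, hjZ, hkZ, pow_add, pow_add]; ring
      _ = ((q : ℤ) - i) * ((q : ℤ) - j) * ((q : ℤ) - k) := heq
      _ = _ := by
          rw [hiZ, hjZ, hkZ]
          nth_rewrite 1 [hqa]; nth_rewrite 1 [hqb]; nth_rewrite 1 [hqc]
          rw [pow_add, pow_add]; ring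
  -- reduce mod p
  have hcast := congrArg (fun t : ℤ => (t : ZMod p)) key
  haveI : Fact p.Prime := ⟨hp⟩
  have hp0 : (p : ZMod p) = 0 := ZMod.natCast_self p
  have hpa : ((p : ZMod p)) ^ (m - a) = 0 := by
    rw [hp0]; exact zero_pow (by omega)
  have hpb : ((p : ZMod p)) ^ (m - b) = 0 := by
    rw [hp0]; exact zero_pow (by omega)
  have hpc : ((p : ZMod p)) ^ (m - c) = 0 := by
    rw [hp0]; exact zero_pow (by omega)
  simp only [Int.cast_mul, Int.cast_sub, Int.cast_pow, Int.cast_natCast] at hcast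
  rw [hpa, hpb, hpc] at hcast
  have h2 : (2 : ZMod p) * ((x : ZMod p) * y * z) = 0 := by
    linear_combination hcast
  have hx0 : (x : ZMod p) ≠ 0 := fun h => hxp ((ZMod.natCast_eq_zero_iff x p).mp h)
  have hy0 : (y : ZMod p) ≠ 0 := fun h => hyp ((ZMod.natCast_eq_zero_iff y p).mp h)
  have hz0 : (z : ZMod p) ≠ 0 := fun h => hzp ((ZMod.natCast_eq_zero_iff z p).mp h)
  have h20 : (2 : ZMod p) ≠ 0 := by
    have : ((2 : ℕ) : ZMod p) ≠ 0 := by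
      rw [Ne, ZMod.natCast_eq_zero_iff]
      intro h
      have := (Nat.prime_dvd_prime_iff_eq hp Nat.prime_two).mp h
      rcases hodd with ⟨t, ht⟩
      omega
    simpa using this
  have := mul_ne_zero h20 (mul_ne_zero (mul_ne_zero hx0 hy0) hz0)
  exact this h2
end

section
/- Let m ≥ 1 be a natural number and set q = 2^m. If integers i, j, k satisfy 1 ≤ i ≤ q−1, 1 ≤ j ≤ q−1, 1 ≤ k ≤ q−1 and i·j·k = (q−i)·(q−j)·(q−k), then i = q/2 or j = q/2 or k = q/2. -/
private lemma aux_v2 {m : ℕ} {x : ℤ} (hx : x ≠ 0) (hb : x.natAbs < 2 ^ m)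
    (he : (2:ℤ) ∣ x) : 1 ≤ padicValNat 2 x.natAbs ∧ padicValNat 2 x.natAbs ≤ m - 1 := by
  have hn : x.natAbs ≠ 0 := Int.natAbs_ne_zero.mpr hx
  constructor
  · exact one_le_padicValNat_of_dvd hn (by omega)
  · by_contra hlt
    have hm : m ≤ padicValNat 2 x.natAbs := by
      omega
    have : (2:ℕ) ^ m ∣ x.natAbs :=
      (pow_dvd_pow 2 hm).trans pow_padicValNat_dvd
    exact absurd (Nat.le_of_dvd (Nat.pos_of_ne_zero hn) this) (by omega)

private lemma aux_main (m : ℕ) (x y z : ℤ) (hx : x ≠ 0) (hy : y ≠ 0) (hz : z ≠ 0)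
    (hbx : x.natAbs < 2 ^ m) (hby : y.natAbs < 2 ^ m) (hbz : z.natAbs < 2 ^ m)
    (hex : (2:ℤ) ∣ x) (hey : (2:ℤ) ∣ y) (hez : (2:ℤ) ∣ z)
    (h : x * y * z = -((2:ℤ) ^ m) ^ 2 * (x + y + z)) : False := by
  set a := padicValNat 2 x.natAbs with ha
  set b := padicValNat 2 y.natAbs with hbdef
  set c := padicValNat 2 z.natAbs with hc
  obtain ⟨ha1, ha2⟩ := aux_v2 hx hbx hex
  obtain ⟨hb1, hb2⟩ := aux_v2 hy hby hey
  obtain ⟨hc1, hc2⟩ := aux_v2 hz hbz hez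
  have hs : x + y + z ≠ 0 := by
    intro h0
    rw [h0, mul_zero] at h
    exact (mul_ne_zero (mul_ne_zero hx hy) hz) h
  -- natAbs equation
  have hnat : x.natAbs * y.natAbs * z.natAbs = 2 ^ (2 * m) * (x + y + z).natAbs := by
    have := congrArg Int.natAbs h
    simpa [Int.natAbs_mul, Int.natAbs_pow, ← pow_mul, mul_comm] using this
  have hxn : x.natAbs ≠ 0 := Int.natAbs_ne_zero.mpr hx
  have hyn : y.natAbs ≠ 0 := Int.natAbs_ne_zero.mpr hy
  have hzn : z.natAbs ≠ 0 := Int.natAbs_ne_zero.mpr hz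
  have hsn : (x + y + z).natAbs ≠ 0 := Int.natAbs_ne_zero.mpr hs
  set d := padicValNat 2 (x + y + z).natAbs with hd
  have hval : a + b + c = 2 * m + d := by
    have := congrArg (padicValNat 2) hnat
    rwa [padicValNat.mul (mul_ne_zero hxn hyn) hzn, padicValNat.mul hxn hyn,
      padicValNat.mul (pow_ne_zero _ two_ne_zero) hsn, padicValNat.prime_pow] at this
  -- min a (min b c) ≤ d
  have hmin : min a (min b c) ≤ d := by
    have hdvd : (2:ℤ) ^ (min a (min b c)) ∣ x + y + z := by
      have dx' : (2:ℕ) ^ (min a (min b c)) ∣ x.natAbs :=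
        (pow_dvd_pow 2 (min_le_left a (min b c))).trans (pow_padicValNat_dvd (p := 2) (n := x.natAbs))
      have dx : (2:ℤ) ^ (min a (min b c)) ∣ x := by
        have := Int.natCast_dvd_natCast.mpr dx'
        push_cast at this
        exact (dvd_abs _ _).mp this
      have dy' : (2:ℕ) ^ (min a (min b c)) ∣ y.natAbs :=
        (pow_dvd_pow 2 ((min_le_right a (min b c)).trans (min_le_left b c))).trans (pow_padicValNat_dvd (p := 2) (n := y.natAbs))
      have dy : (2:ℤ) ^ (min a (min b c)) ∣ y := by
        have := Int.natCast_dvd_natCast.mpr dy'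
        push_cast at this
        exact (dvd_abs _ _).mp this
      have dz' : (2:ℕ) ^ (min a (min b c)) ∣ z.natAbs :=
        (pow_dvd_pow 2 ((min_le_right a (min b c)).trans (min_le_right b c))).trans (pow_padicValNat_dvd (p := 2) (n := z.natAbs))
      have dz : (2:ℤ) ^ (min a (min b c)) ∣ z := by
        have := Int.natCast_dvd_natCast.mpr dz'
        push_cast at this
        exact (dvd_abs _ _).mp this
      exact dvd_add (dvd_add dx dy) dz
    have : (2:ℕ) ^ (min a (min b c)) ∣ (x + y + z).natAbs := by
      rw [← Int.natAbs_natCast (2 ^ (min a (min b c)))]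
      exact Int.natAbs_dvd_natAbs.mpr (by simpa using hdvd)
    exact ((padicValNat_dvd_iff_le hsn).mp this)
  omega

/-- For `q = 2^m` (with `m ≥ 1`), if integers `1 ≤ i, j, k ≤ q − 1` satisfy
`i·j·k = (q−i)·(q−j)·(q−k)`, then at least one of `i, j, k` equals `q/2`. -/
theorem stmt_9 (m q : ℕ) (hm : 1 ≤ m) (hq : q = 2 ^ m)
    (i j k : ℤ)
    (hi1 : 1 ≤ i) (hi2 : i ≤ (q : ℤ) - 1)
    (hj1 : 1 ≤ j) (hj2 : j ≤ (q : ℤ) - 1)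
    (hk1 : 1 ≤ k) (hk2 : k ≤ (q : ℤ) - 1)
    (heq : i * j * k = ((q : ℤ) - i) * ((q : ℤ) - j) * ((q : ℤ) - k)) :
    i = (q : ℤ) / 2 ∨ j = (q : ℤ) / 2 ∨ k = (q : ℤ) / 2 := by
  by_contra hcon
  push_neg at hcon
  obtain ⟨hi, hj, hk⟩ := hcon
  have hqe : (2:ℤ) ∣ (q:ℤ) := by
    rw [hq]; push_cast
    exact dvd_pow_self 2 (by omega)
  have hx : 2 * i - (q:ℤ) ≠ 0 := by omega
  have hy : 2 * j - (q:ℤ) ≠ 0 := by omega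
  have hz : 2 * k - (q:ℤ) ≠ 0 := by omega
  have hqZ : (q:ℤ) = 2 ^ m := by exact_mod_cast congrArg (Nat.cast : ℕ → ℤ) hq
  have hkey : (2*i - q) * (2*j - q) * (2*k - q)
      = -((2:ℤ) ^ m) ^ 2 * ((2*i - q) + (2*j - q) + (2*k - q)) := by
    rw [← hqZ]; linear_combination 4 * heq
  have hbx : (2 * i - (q:ℤ)).natAbs < q := by omega
  have hby : (2 * j - (q:ℤ)).natAbs < q := by omega
  have hbz : (2 * k - (q:ℤ)).natAbs < q := by omega
  exact aux_main m _ _ _ hx hy hz (by rw [← hq]; omega) (by rw [← hq]; omega) (by rw [← hq]; omega)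
    (by omega) (by omega) (by omega) hkey
end

section
/- Let m ≥ 1 be a natural number and set q = 2^m. For integers i, j, k with 1 ≤ i ≤ q−1, 1 ≤ j ≤ q−1, 1 ≤ k ≤ q−1, the equation i·j·k = (q−i)·(q−j)·(q−k) holds if and only if (i = q/2 and j + k = q) or (j = q/2 and i + k = q) or (k = q/2 and i + j = q). -/
/-- Decompose `0 < x < 2^m` as `2^a * u` with `u` odd, and `2^m - x = 2^a * U`
with `U` odd and `u + U = 2^(m-a)`, where `a = x.factorization 2 < m`. -/
lemma decomp_aux_s10 (m x : ℕ) (hx1 : 0 < x) (hx2 : x < 2 ^ m) :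
    ∃ u U : ℕ, x = 2 ^ (x.factorization 2) * u ∧
      2 ^ m - x = 2 ^ (x.factorization 2) * U ∧
      u % 2 = 1 ∧ U % 2 = 1 ∧ u + U = 2 ^ (m - x.factorization 2) ∧
      x.factorization 2 < m := by
  set a := x.factorization 2 with ha
  have hxu : x = 2 ^ a * (x / 2 ^ a) := (Nat.ordProj_mul_ordCompl_eq_self x 2).symm
  set u := x / 2 ^ a with hu
  have hodd : ¬ (2 ∣ u) := Nat.not_dvd_ordCompl Nat.prime_two hx1.ne'
  have ham : a < m := by
    by_contra h
    have h2 : 2 ^ m ∣ x := dvd_trans (pow_dvd_pow 2 (by omega)) (Nat.ordProj_dvd x 2)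
    exact absurd (Nat.le_of_dvd hx1 h2) (by omega)
  have hum : u < 2 ^ (m - a) := by
    have h1 : 2 ^ a * u < 2 ^ a * 2 ^ (m - a) := by
      rw [← pow_add]
      have : a + (m - a) = m := by omega
      rw [this, ← hxu]; exact hx2
    exact Nat.lt_of_mul_lt_mul_left h1
  refine ⟨u, 2 ^ (m - a) - u, hxu, ?_, by omega, ?_, by omega, ham⟩
  · have h1 : 2 ^ a * u + 2 ^ a * (2 ^ (m - a) - u) = 2 ^ m := by
      rw [← Nat.mul_add]
      rw [Nat.add_sub_cancel' hum.le, ← pow_add]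
      congr 1; omega
    omega
  · have heven : 2 ∣ 2 ^ (m - a) := dvd_pow_self 2 (by omega)
    omega

/-- Key lemma: if `k` has the largest 2-adic valuation among `i, j, k`, then
the Ceva equation forces `k = 2^(m-1)` and `i + j = 2^m`. -/
lemma ceva_aux (m : ℕ) (hm : 1 ≤ m) (i j k : ℕ)
    (hi1 : 0 < i) (hi2 : i < 2 ^ m)
    (hj1 : 0 < j) (hj2 : j < 2 ^ m)
    (hk1 : 0 < k) (hk2 : k < 2 ^ m)
    (heq : i * j * k = (2 ^ m - i) * (2 ^ m - j) * (2 ^ m - k))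
    (hac : i.factorization 2 ≤ k.factorization 2)
    (hbc : j.factorization 2 ≤ k.factorization 2) :
    k = 2 ^ (m - 1) ∧ i + j = 2 ^ m := by
  obtain ⟨u, U, hiu, hiU, hu, hU, huU, ham⟩ := decomp_aux_s10 m i hi1 hi2
  obtain ⟨v, V, hjv, hjV, hv, hV, hvV, hbm⟩ := decomp_aux_s10 m j hj1 hj2
  obtain ⟨w, W, hkw, hkW, hw, hW, hwW, hcm⟩ := decomp_aux_s10 m k hk1 hk2
  set a := i.factorization 2
  set b := j.factorization 2
  set c := k.factorization 2
  -- odd parts are equal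
  have key : u * v * w = U * V * W := by
    rw [hiU, hjV, hkW, hiu, hjv, hkw] at heq
    have h1 : 2 ^ a * u * (2 ^ b * v) * (2 ^ c * w)
        = 2 ^ (a + b + c) * (u * v * w) := by rw [pow_add, pow_add]; ring
    have h2 : 2 ^ a * U * (2 ^ b * V) * (2 ^ c * W)
        = 2 ^ (a + b + c) * (U * V * W) := by rw [pow_add, pow_add]; ring
    rw [h1, h2] at heq
    exact Nat.eq_of_mul_eq_mul_left (Nat.pow_pos (by norm_num)) heq
  -- congruence modulo 2^(m-c)
  have d1 : (2 : ℤ) ^ (m - c) ∣ ((U : ℤ) + u) := by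
    have : (U : ℤ) + u = 2 ^ (m - a) := by exact_mod_cast by push_cast [← huU]; ring
    rw [this]; exact pow_dvd_pow 2 (by omega)
  have d2 : (2 : ℤ) ^ (m - c) ∣ ((V : ℤ) + v) := by
    have : (V : ℤ) + v = 2 ^ (m - b) := by exact_mod_cast by push_cast [← hvV]; ring
    rw [this]; exact pow_dvd_pow 2 (by omega)
  have d3 : (2 : ℤ) ^ (m - c) ∣ ((W : ℤ) + w) := by
    have : (W : ℤ) + w = 2 ^ (m - c) := by exact_mod_cast by push_cast [← hwW]; ring
    rw [this]
  have m1 : (U : ℤ) ≡ -(u : ℤ) [ZMOD 2 ^ (m - c)] :=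
    Int.modEq_iff_dvd.2 (by rw [show -(u : ℤ) - U = -((U : ℤ) + u) by ring]; exact d1.neg_right)
  have m2 : (V : ℤ) ≡ -(v : ℤ) [ZMOD 2 ^ (m - c)] :=
    Int.modEq_iff_dvd.2 (by rw [show -(v : ℤ) - V = -((V : ℤ) + v) by ring]; exact d2.neg_right)
  have m3 : (W : ℤ) ≡ -(w : ℤ) [ZMOD 2 ^ (m - c)] :=
    Int.modEq_iff_dvd.2 (by rw [show -(w : ℤ) - W = -((W : ℤ) + w) by ring]; exact d3.neg_right)
  have mp : ((u : ℤ) * v * w) ≡ -((u : ℤ) * v * w) [ZMOD 2 ^ (m - c)] := by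
    have h := (m1.mul m2).mul m3
    have hk' : ((u : ℤ) * v * w) = (U : ℤ) * V * W := by exact_mod_cast key
    calc ((u : ℤ) * v * w) = (U : ℤ) * V * W := hk'
      _ ≡ (-(u:ℤ)) * (-(v:ℤ)) * (-(w:ℤ)) [ZMOD 2 ^ (m - c)] := h
      _ = -((u : ℤ) * v * w) := by ring
  have hdvd2 : (2 : ℤ) ^ (m - c) ∣ 2 * ((u : ℤ) * v * w) := by
    have h := Int.ModEq.dvd mp
    rw [show -((u:ℤ) * v * w) - ((u:ℤ) * v * w) = -(2 * ((u:ℤ) * v * w)) by ring] at h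
    exact (dvd_neg).1 h
  -- deduce m - c ≤ 1
  have hmc : m - c ≤ 1 := by
    by_contra h
    have h4 : (4 : ℤ) ∣ 2 * ((u : ℤ) * v * w) := by
      refine dvd_trans ?_ hdvd2
      have : (4 : ℤ) = 2 ^ 2 := by norm_num
      rw [this]; exact pow_dvd_pow 2 (by omega)
    have h2 : (2 : ℤ) ∣ ((u : ℤ) * v * w) := by
      obtain ⟨t, ht⟩ := h4
      exact ⟨t, by linarith⟩
    have hdn : (2 : ℕ) ∣ u * v * w := by exact_mod_cast (by push_cast at h2 ⊢; exact h2 : (2:ℤ) ∣ ((u * v * w : ℕ) : ℤ))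
    have hod : (u * v * w) % 2 = 1 :=
      Nat.odd_iff.1 (((Nat.odd_iff.2 hu).mul (Nat.odd_iff.2 hv)).mul (Nat.odd_iff.2 hw))
    omega
  have hc : c = m - 1 := by omega
  -- hence k = 2^(m-1)
  have hw1 : w = 1 := by
    have hklt : 2 ^ c * w < 2 ^ c * 2 := by
      rw [← pow_succ]
      have : c + 1 = m := by omega
      rw [this, ← hkw]; exact hk2
    have := Nat.lt_of_mul_lt_mul_left hklt
    omega
  have hkval : k = 2 ^ (m - 1) := by rw [hkw, hw1, hc, mul_one]
  refine ⟨hkval, ?_⟩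
  -- substitute into the equation and cancel
  have h2k : 2 ^ m - 2 ^ (m - 1) = 2 ^ (m - 1) := by
    have h1 : 2 ^ (m - 1) + 2 ^ (m - 1) = 2 ^ m := by
      rw [← two_mul, ← pow_succ']
      congr 1; omega
    omega
  rw [hkval, h2k] at heq
  have hij : i * j = (2 ^ m - i) * (2 ^ m - j) :=
    Nat.eq_of_mul_eq_mul_right (Nat.pow_pos (by norm_num)) heq
  have hijZ : (i : ℤ) * j = ((2 : ℤ) ^ m - i) * ((2 : ℤ) ^ m - j) := by
    have := congrArg (fun n : ℕ => (n : ℤ)) hij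
    push_cast [Nat.cast_sub hi2.le, Nat.cast_sub hj2.le] at this
    exact_mod_cast this
  have h0 : ((2 : ℤ) ^ m) * ((2 : ℤ) ^ m - i - j) = 0 := by linear_combination -hijZ
  have h0' : ((2 : ℤ) ^ m - i - j) = 0 := by
    rcases mul_eq_zero.1 h0 with h | h
    · exact absurd h (by positivity)
    · exact h
  have : (i : ℤ) + j = 2 ^ m := by linarith
  exact_mod_cast this

/-- For `q = 2^m` (with `m ≥ 1`) and integers `1 ≤ i, j, k ≤ q − 1`, the equation
`i·j·k = (q−i)·(q−j)·(q−k)` holds iff one of `i, j, k` equals `q/2` and the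
other two sum to `q`. -/
theorem stmt_10 (m q : ℕ) (hm : 1 ≤ m) (hq : q = 2 ^ m)
    (i j k : ℤ)
    (hi1 : 1 ≤ i) (hi2 : i ≤ (q : ℤ) - 1)
    (hj1 : 1 ≤ j) (hj2 : j ≤ (q : ℤ) - 1)
    (hk1 : 1 ≤ k) (hk2 : k ≤ (q : ℤ) - 1) :
    i * j * k = ((q : ℤ) - i) * ((q : ℤ) - j) * ((q : ℤ) - k) ↔
      (i = (q : ℤ) / 2 ∧ j + k = (q : ℤ)) ∨
      (j = (q : ℤ) / 2 ∧ i + k = (q : ℤ)) ∨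
      (k = (q : ℤ) / 2 ∧ i + j = (q : ℤ)) := by
  have hq2 : ((q : ℤ)) = 2 ^ (m - 1) * 2 := by
    subst hq; push_cast; rw [← pow_succ]; congr 1; omega
  have hdiv : (q : ℤ) / 2 = 2 ^ (m - 1) := by
    rw [hq2]; exact Int.mul_ediv_cancel _ two_ne_zero
  constructor
  · intro heq
    -- move to ℕ
    set I := i.toNat with hI
    set J := j.toNat with hJ
    set K := k.toNat with hK
    have hiI : (I : ℤ) = i := Int.toNat_of_nonneg (by linarith)
    have hjJ : (J : ℤ) = j := Int.toNat_of_nonneg (by linarith)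
    have hkK : (K : ℤ) = k := Int.toNat_of_nonneg (by linarith)
    have hI1 : 0 < I := by omega
    have hJ1 : 0 < J := by omega
    have hK1 : 0 < K := by omega
    have hqm : (q : ℤ) = 2 ^ m := by subst hq; push_cast; ring
    have hI2 : I < 2 ^ m := by
      have : (I : ℤ) < 2 ^ m := by rw [hiI]; omega
      exact_mod_cast this
    have hJ2 : J < 2 ^ m := by
      have : (J : ℤ) < 2 ^ m := by rw [hjJ]; omega
      exact_mod_cast this
    have hK2 : K < 2 ^ m := by
      have : (K : ℤ) < 2 ^ m := by rw [hkK]; omega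
      exact_mod_cast this
    have heqN : I * J * K = (2 ^ m - I) * (2 ^ m - J) * (2 ^ m - K) := by
      have hcast : ((I * J * K : ℕ) : ℤ) = (((2 ^ m - I) * (2 ^ m - J) * (2 ^ m - K) : ℕ) : ℤ) := by
        push_cast [Nat.cast_sub hI2.le, Nat.cast_sub hJ2.le, Nat.cast_sub hK2.le]
        rw [hiI, hjJ, hkK]
        rw [hqm] at heq
        exact_mod_cast heq
      exact_mod_cast hcast
    set A := I.factorization 2
    set B := J.factorization 2
    set C := K.factorization 2
    have hcases : (A ≤ C ∧ B ≤ C) ∨ (B ≤ A ∧ C ≤ A) ∨ (A ≤ B ∧ C ≤ B) := by omega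
    rcases hcases with ⟨h1, h2⟩ | ⟨h1, h2⟩ | ⟨h1, h2⟩
    · -- k is the middle
      obtain ⟨hk0, hij0⟩ := ceva_aux m hm I J K hI1 hI2 hJ1 hJ2 hK1 hK2 heqN h1 h2
      refine Or.inr (Or.inr ⟨?_, ?_⟩)
      · rw [hdiv, ← hkK, hk0]; push_cast; ring
      · rw [hqm, ← hiI, ← hjJ]; exact_mod_cast hij0
    · -- i is the max
      have heqN' : J * K * I = (2 ^ m - J) * (2 ^ m - K) * (2 ^ m - I) := by
        rw [show J * K * I = I * J * K by ring, heqN]; ring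
      obtain ⟨hi0, hjk0⟩ := ceva_aux m hm J K I hJ1 hJ2 hK1 hK2 hI1 hI2 heqN' h1 h2
      refine Or.inl ⟨?_, ?_⟩
      · rw [hdiv, ← hiI, hi0]; push_cast; ring
      · rw [hqm, ← hjJ, ← hkK]; exact_mod_cast hjk0
    · -- j is the max
      have heqN' : I * K * J = (2 ^ m - I) * (2 ^ m - K) * (2 ^ m - J) := by
        rw [show I * K * J = I * J * K by ring, heqN]; ring
      obtain ⟨hj0, hik0⟩ := ceva_aux m hm I K J hI1 hI2 hK1 hK2 hJ1 hJ2 heqN' h1 h2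
      refine Or.inr (Or.inl ⟨?_, ?_⟩)
      · rw [hdiv, ← hjJ, hj0]; push_cast; ring
      · rw [hqm, ← hiI, ← hkK]; exact_mod_cast hik0
  · rintro (⟨h1, h2⟩ | ⟨h1, h2⟩ | ⟨h1, h2⟩) <;>
      (rw [hdiv] at h1; subst h1; rw [hq2] at h2 ⊢; linear_combination 2 * ((2:ℤ) ^ (m - 1)) ^ 2 * h2)
end

section
/- Let m ≥ 1 be a natural number and set q = 2^m. Then the number of triples (i, j, k) of integers with 1 ≤ i ≤ q−1, 1 ≤ j ≤ q−1, 1 ≤ k ≤ q−1 satisfying i·j·k = (q−i)·(q−j)·(q−k) is exactly 3q − 5. -/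
/-- Every `i` with `1 ≤ i ≤ 2^(n+1) - 1` is either `2^n`, or has 2-adic valuation
at most `n - 1`. -/
lemma split_aux (n : ℕ) (i : ℤ) (hi1 : 1 ≤ i) (hi2 : i ≤ 2 ^ (n + 1) - 1) :
    i = 2 ^ n ∨ ∃ (a x : ℕ), Odd x ∧ a + 2 ≤ n + 1 ∧ i = 2 ^ a * (x : ℤ) := by
  have hN : ((i.toNat : ℤ)) = i := Int.toNat_of_nonneg (by linarith)
  set N := i.toNat with hNdef
  have hN0 : N ≠ 0 := by omega
  obtain ⟨a, x, hx, hNe⟩ := Nat.exists_eq_two_pow_mul_odd hN0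
  have hx1 : 1 ≤ x := hx.pos
  have hNlt : N < 2 ^ (n + 1) := by
    have : (N : ℤ) < 2 ^ (n + 1) := by omega
    exact_mod_cast this
  have ha : a ≤ n := by
    by_contra h
    push_neg at h
    have h1 : 2 ^ (n + 1) ≤ 2 ^ a := Nat.pow_le_pow_right (by norm_num) h
    have h2 : 2 ^ a ≤ N := by
      calc 2 ^ a ≤ 2 ^ a * x := Nat.le_mul_of_pos_right _ (by omega)
        _ = N := hNe.symm
    omega
  rcases eq_or_lt_of_le ha with rfl | hlt
  · left
    have h2a : 0 < 2 ^ a := Nat.pow_pos (by norm_num)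
    have hxeq : x = 1 := by
      by_contra hx1'
      have hx3 : 3 ≤ x := by
        rcases hx with ⟨t, ht⟩; omega
      have hle : 2 ^ a * 3 ≤ N := by
        rw [hNe]; exact Nat.mul_le_mul_left _ hx3
      have hp : 2 ^ (a + 1) = 2 ^ a * 2 := pow_succ 2 a
      omega
    rw [← hN, hNe, hxeq]
    push_cast; ring
  · right
    exact ⟨a, x, hx, by omega, by rw [← hN, hNe]; push_cast; ring⟩

/-- If the Ceva product equation holds, some coordinate is `2^n`. -/
lemma coordA (n : ℕ) (i j k : ℤ)
    (hi1 : 1 ≤ i) (hi2 : i ≤ 2 ^ (n + 1) - 1)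
    (hj1 : 1 ≤ j) (hj2 : j ≤ 2 ^ (n + 1) - 1)
    (hk1 : 1 ≤ k) (hk2 : k ≤ 2 ^ (n + 1) - 1)
    (heq : i * j * k = (2 ^ (n + 1) - i) * (2 ^ (n + 1) - j) * (2 ^ (n + 1) - k)) :
    i = 2 ^ n ∨ j = 2 ^ n ∨ k = 2 ^ n := by
  rcases split_aux n i hi1 hi2 with h | ⟨a, x, hx, ha, rfl⟩
  · exact Or.inl h
  rcases split_aux n j hj1 hj2 with h | ⟨b, y, hy, hb, rfl⟩
  · exact Or.inr (Or.inl h)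
  rcases split_aux n k hk1 hk2 with h | ⟨c, z, hz, hc, rfl⟩
  · exact Or.inr (Or.inr h)
  exfalso
  obtain ⟨d, hd⟩ : ∃ d, n + 1 = a + 2 + d := ⟨n + 1 - (a + 2), by omega⟩
  obtain ⟨e, he⟩ : ∃ e, n + 1 = b + 2 + e := ⟨n + 1 - (b + 2), by omega⟩
  obtain ⟨f, hf⟩ : ∃ f, n + 1 = c + 2 + f := ⟨n + 1 - (c + 2), by omega⟩
  have e1 : (2 : ℤ) ^ (n + 1) - 2 ^ a * (x : ℤ) = 2 ^ a * (4 * 2 ^ d - x) := by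
    rw [hd]; ring
  have e2 : (2 : ℤ) ^ (n + 1) - 2 ^ b * (y : ℤ) = 2 ^ b * (4 * 2 ^ e - y) := by
    rw [he]; ring
  have e3 : (2 : ℤ) ^ (n + 1) - 2 ^ c * (z : ℤ) = 2 ^ c * (4 * 2 ^ f - z) := by
    rw [hf]; ring
  rw [e1, e2, e3] at heq
  have hcan : (x : ℤ) * y * z = (4 * 2 ^ d - x) * (4 * 2 ^ e - y) * (4 * 2 ^ f - z) := by
    have h20 : ((2 : ℤ) ^ (a + b + c)) ≠ 0 := by positivity
    apply mul_left_cancel₀ h20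
    linear_combination heq
  have h2 : 2 * ((x : ℤ) * y * z) =
      4 * (16 * 2 ^ d * 2 ^ e * 2 ^ f - 4 * 2 ^ d * 2 ^ e * (z : ℤ)
        - 4 * 2 ^ d * 2 ^ f * (y : ℤ) - 4 * 2 ^ e * 2 ^ f * (x : ℤ)
        + 2 ^ d * (y : ℤ) * z + 2 ^ e * (x : ℤ) * z + 2 ^ f * (x : ℤ) * y) := by
    linear_combination hcan
  have hodd : Odd ((x : ℤ) * y * z) := by
    exact_mod_cast (hx.mul hy).mul hz
  obtain ⟨t, ht⟩ := hodd
  have hdvd : (4 : ℤ) ∣ 2 * ((x : ℤ) * y * z) := ⟨_, h2⟩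
  rw [ht] at hdvd
  omega

lemma sumeq (q j k : ℤ) (hq : q ≠ 0) (heq : j * k = (q - j) * (q - k)) : j + k = q := by
  have h : q * (q - j - k) = 0 := by linear_combination -heq
  rcases mul_eq_zero.mp h with h' | h'
  · exact absurd h' hq
  · linarith

/-- For `q = 2^m` (with `m ≥ 1`), the number of integer triples `(i, j, k)` with
`1 ≤ i, j, k ≤ q − 1` and `i·j·k = (q−i)·(q−j)·(q−k)` is exactly `3q − 5`. -/
theorem stmt_11 (m q : ℕ) (hm : 1 ≤ m) (hq : q = 2 ^ m) :
    ((((Finset.Icc (1 : ℤ) ((q : ℤ) - 1)) ×ˢ (Finset.Icc (1 : ℤ) ((q : ℤ) - 1))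
        ×ˢ (Finset.Icc (1 : ℤ) ((q : ℤ) - 1))).filter
      (fun t : ℤ × ℤ × ℤ => t.1 * t.2.1 * t.2.2 =
        ((q : ℤ) - t.1) * ((q : ℤ) - t.2.1) * ((q : ℤ) - t.2.2))).card : ℤ)
      = 3 * (q : ℤ) - 5 := by
  subst hq
  obtain ⟨n, rfl⟩ : ∃ n, m = n + 1 := ⟨m - 1, by omega⟩
  have hcast : (((2 ^ (n + 1) : ℕ) : ℤ)) = 2 ^ (n + 1) := by push_cast; ring
  rw [hcast]
  set Q : ℤ := 2 ^ (n + 1) with hQdef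
  set H : ℤ := 2 ^ n with hHdef
  have hQH : Q = 2 * H := by rw [hQdef, hHdef]; ring
  have hH1 : 1 ≤ H := by rw [hHdef]; exact one_le_pow₀ one_le_two
  have hH0 : H ≠ 0 := by omega
  set I : Finset ℤ := Finset.Icc (1 : ℤ) (Q - 1) with hIdef
  set A : Finset (ℤ × ℤ × ℤ) := I.image (fun j => (H, j, Q - j)) with hA
  set B : Finset (ℤ × ℤ × ℤ) := I.image (fun i => (i, H, Q - i)) with hB
  set C : Finset (ℤ × ℤ × ℤ) := I.image (fun i => (i, Q - i, H)) with hC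
  have hHI : H ∈ I := by
    rw [hIdef, Finset.mem_Icc]; omega
  have hset : ((I ×ˢ I ×ˢ I).filter
      (fun t : ℤ × ℤ × ℤ => t.1 * t.2.1 * t.2.2 = (Q - t.1) * (Q - t.2.1) * (Q - t.2.2)))
      = A ∪ B ∪ C := by
    ext ⟨i, j, k⟩
    simp only [Finset.mem_filter, Finset.mem_product, Finset.mem_union, Finset.mem_image,
      hA, hB, hC, hIdef, Finset.mem_Icc, Prod.mk.injEq]
    constructor
    · rintro ⟨⟨⟨hi1, hi2⟩, ⟨hj1, hj2⟩, ⟨hk1, hk2⟩⟩, heq⟩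
      rcases coordA n i j k hi1 hi2 hj1 hj2 hk1 hk2 heq with hih | hjh | hkh
      · refine Or.inl (Or.inl ?_)
        subst hih
        have h' : j * k = (Q - j) * (Q - k) := by
          apply mul_left_cancel₀ hH0
          rw [hQH] at heq ⊢
          linear_combination heq
        have := sumeq Q j k (by omega) h'
        exact ⟨j, ⟨hj1, hj2⟩, hHdef, rfl, by omega⟩
      · refine Or.inl (Or.inr ?_)
        subst hjh
        have h' : i * k = (Q - i) * (Q - k) := by
          apply mul_left_cancel₀ hH0
          rw [hQH] at heq ⊢
          linear_combination heq
        have := sumeq Q i k (by omega) h'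
        exact ⟨i, ⟨hi1, hi2⟩, rfl, hHdef, by omega⟩
      · refine Or.inr ?_
        subst hkh
        have h' : i * j = (Q - i) * (Q - j) := by
          apply mul_left_cancel₀ hH0
          rw [hQH] at heq ⊢
          linear_combination heq
        have := sumeq Q i j (by omega) h'
        exact ⟨i, ⟨hi1, hi2⟩, rfl, by omega, hHdef⟩
    · rintro ((⟨j', ⟨h1, h2⟩, rfl, rfl, rfl⟩ | ⟨i', ⟨h1, h2⟩, rfl, rfl, rfl⟩) |
        ⟨i', ⟨h1, h2⟩, rfl, rfl, rfl⟩)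
      · exact ⟨⟨⟨by omega, by omega⟩, ⟨by omega, by omega⟩, ⟨by omega, by omega⟩⟩,
          by rw [hQH]; ring⟩
      · exact ⟨⟨⟨by omega, by omega⟩, ⟨by omega, by omega⟩, ⟨by omega, by omega⟩⟩,
          by rw [hQH]; ring⟩
      · exact ⟨⟨⟨by omega, by omega⟩, ⟨by omega, by omega⟩, ⟨by omega, by omega⟩⟩,
          by rw [hQH]; ring⟩
  rw [hset]
  -- cardinalities
  have cardA : A.card = I.card := Finset.card_image_of_injective _ (by
    intro a b hab; simpa using hab)
  have cardB : B.card = I.card := Finset.card_image_of_injective _ (by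
    intro a b hab; simpa using hab)
  have cardC : C.card = I.card := Finset.card_image_of_injective _ (by
    intro a b hab; simpa using hab)
  have hAB : A ∩ B = {(H, H, H)} := by
    ext ⟨i, j, k⟩
    simp only [Finset.mem_inter, hA, hB, Finset.mem_image, hIdef, Finset.mem_Icc,
      Prod.mk.injEq, Finset.mem_singleton]
    constructor
    · rintro ⟨⟨j', ⟨h1, h2⟩, rfl, rfl, rfl⟩, ⟨i', ⟨h3, h4⟩, h5, h6, h7⟩⟩
      refine ⟨rfl, h6.symm, by omega⟩
    · rintro ⟨rfl, rfl, rfl⟩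
      exact ⟨⟨H, ⟨by omega, by omega⟩, rfl, rfl, by omega⟩,
        ⟨H, ⟨by omega, by omega⟩, rfl, rfl, by omega⟩⟩
  have hAC : A ∩ C = {(H, H, H)} := by
    ext ⟨i, j, k⟩
    simp only [Finset.mem_inter, hA, hC, Finset.mem_image, hIdef, Finset.mem_Icc,
      Prod.mk.injEq, Finset.mem_singleton]
    constructor
    · rintro ⟨⟨j', ⟨h1, h2⟩, rfl, rfl, rfl⟩, ⟨i', ⟨h3, h4⟩, h5, h6, h7⟩⟩
      refine ⟨rfl, by omega, h7.symm⟩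
    · rintro ⟨rfl, rfl, rfl⟩
      exact ⟨⟨H, ⟨by omega, by omega⟩, rfl, rfl, by omega⟩,
        ⟨H, ⟨by omega, by omega⟩, rfl, by omega, rfl⟩⟩
  have hBC : B ∩ C = {(H, H, H)} := by
    ext ⟨i, j, k⟩
    simp only [Finset.mem_inter, hB, hC, Finset.mem_image, hIdef, Finset.mem_Icc,
      Prod.mk.injEq, Finset.mem_singleton]
    constructor
    · rintro ⟨⟨i', ⟨h1, h2⟩, rfl, rfl, rfl⟩, ⟨i'', ⟨h3, h4⟩, h5, h6, h7⟩⟩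
      refine ⟨by omega, rfl, by omega⟩
    · rintro ⟨rfl, rfl, rfl⟩
      exact ⟨⟨H, ⟨by omega, by omega⟩, rfl, rfl, by omega⟩,
        ⟨H, ⟨by omega, by omega⟩, rfl, by omega, rfl⟩⟩
  have hABC : (A ∪ B) ∩ C = {(H, H, H)} := by
    rw [Finset.union_inter_distrib_right, hAC, hBC, Finset.union_self]
  have c1 : (A ∪ B).card + (A ∩ B).card = A.card + B.card :=
    Finset.card_union_add_card_inter A B
  have c2 : ((A ∪ B) ∪ C).card + ((A ∪ B) ∩ C).card = (A ∪ B).card + C.card :=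
    Finset.card_union_add_card_inter (A ∪ B) C
  rw [hAB] at c1
  rw [hABC] at c2
  simp only [Finset.card_singleton] at c1 c2
  have hNI : (I.card : ℤ) = Q - 1 := by
    rw [hIdef, Int.card_Icc]
    rw [Int.toNat_of_nonneg (by omega)]
    ring
  have hfin : ((A ∪ B) ∪ C).card + 2 = 3 * I.card := by omega
  have hfin' : (((A ∪ B) ∪ C).card : ℤ) + 2 = 3 * (I.card : ℤ) := by exact_mod_cast hfin
  omega
end
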